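/- Let (M₃₃, L₃, H, D₃, A₃₃) ∈ ℝ⁵, let a₀, a₁ ∈ ℝ and a₂, a₃ ∈ ℝ with a₂ ≠ 0, a₃ ≠ 0, and let (M̃₃₃, L̃₃, H̃, D̃₃, Ã₃₃) be given by the group action formulas. Define q(z) = M₃₃z⁴ + L₃z³ + Hz² + D₃z + A₃₃ and q̃(z) = M̃₃₃z⁴ + L̃₃z³ + H̃z² + D̃₃z + Ã₃₃. Then for every z ∈ ℝ with a₀z + 1 ≠ 0, (a₀z + 1)⁴ · q̃( ((a₂ + a₁a₀)z + a₁)/(a₀z + 1) ) = a₃a₂² · q(z). That is, q is a relative covariant (of weight two, up to the factor a₃) of the extended action restricted to the rotation axis. -/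

import Mathlib

/-- The auxiliary quartic polynomial `P(t) = A₃₃t⁴ − D₃t³ + Ht² − L₃t + M₃₃`. -/
noncomputable def Pq (M33 L3 H D3 A33 : ℝ) : ℝ → ℝ :=
  fun t => A33 * t ^ 4 - D3 * t ^ 3 + H * t ^ 2 - L3 * t + M33

/-- `P⁽ⁿ⁾(t) = (1/n!) · (n`-th derivative of `P` at `t)`. -/
noncomputable def Pder (M33 L3 H D3 A33 : ℝ) (n : ℕ) (t : ℝ) : ℝ :=
  iteratedDeriv n (Pq M33 L3 H D3 A33) t / n.factorial

/-- The polynomial `q(z) = M₃₃z⁴ + L₃z³ + Hz² + D₃z + A₃₃`. -/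
def qpoly (M33 L3 H D3 A33 z : ℝ) : ℝ :=
  M33 * z ^ 4 + L3 * z ^ 3 + H * z ^ 2 + D3 * z + A33

lemma deriv1 (M33 L3 H D3 A33 : ℝ) :
    deriv (Pq M33 L3 H D3 A33) =
      fun t => 4 * A33 * t ^ 3 - 3 * D3 * t ^ 2 + 2 * H * t - L3 := by
  funext t
  have h : HasDerivAt (Pq M33 L3 H D3 A33)
      (4 * A33 * t ^ 3 - 3 * D3 * t ^ 2 + 2 * H * t - L3) t := by
    have := (((((hasDerivAt_pow 4 t).const_mul A33).sub
      ((hasDerivAt_pow 3 t).const_mul D3)).add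
      ((hasDerivAt_pow 2 t).const_mul H)).sub
      ((hasDerivAt_id t).const_mul L3)).add_const M33
    refine this.congr_deriv ?_
    push_cast; ring
  exact h.deriv

lemma deriv2 (H D3 A33 : ℝ) :
    deriv (fun t : ℝ => 4 * A33 * t ^ 3 - 3 * D3 * t ^ 2 + 2 * H * t - L3) =
      fun t => 12 * A33 * t ^ 2 - 6 * D3 * t + 2 * H := by
  funext t
  have h : HasDerivAt (fun t : ℝ => 4 * A33 * t ^ 3 - 3 * D3 * t ^ 2 + 2 * H * t - L3)
      (12 * A33 * t ^ 2 - 6 * D3 * t + 2 * H) t := by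
    have := ((((hasDerivAt_pow 3 t).const_mul (4 * A33)).sub
      ((hasDerivAt_pow 2 t).const_mul (3 * D3))).add
      ((hasDerivAt_id t).const_mul (2 * H))).sub_const L3
    refine this.congr_deriv ?_
    push_cast; ring
  exact h.deriv

lemma deriv3 (H D3 A33 : ℝ) :
    deriv (fun t : ℝ => 12 * A33 * t ^ 2 - 6 * D3 * t + 2 * H) =
      fun t => 24 * A33 * t - 6 * D3 := by
  funext t
  have h : HasDerivAt (fun t : ℝ => 12 * A33 * t ^ 2 - 6 * D3 * t + 2 * H)
      (24 * A33 * t - 6 * D3) t := by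
    have := (((hasDerivAt_pow 2 t).const_mul (12 * A33)).sub
      ((hasDerivAt_id t).const_mul (6 * D3))).add_const (2 * H)
    refine this.congr_deriv ?_
    push_cast; ring
  exact h.deriv

lemma deriv4 (A33 D3 : ℝ) :
    deriv (fun t : ℝ => 24 * A33 * t - 6 * D3) = fun _ => 24 * A33 := by
  funext t
  have h : HasDerivAt (fun t : ℝ => 24 * A33 * t - 6 * D3) (24 * A33) t := by
    have := (((hasDerivAt_id t).const_mul (24 * A33))).sub_const (6 * D3)
    refine this.congr_deriv ?_
    ring
  exact h.deriv

lemma Pder0 (M33 L3 H D3 A33 t : ℝ) :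
    Pder M33 L3 H D3 A33 0 t = A33 * t ^ 4 - D3 * t ^ 3 + H * t ^ 2 - L3 * t + M33 := by
  simp [Pder, iteratedDeriv_zero, Pq]

lemma Pder1 (M33 L3 H D3 A33 t : ℝ) :
    Pder M33 L3 H D3 A33 1 t = 4 * A33 * t ^ 3 - 3 * D3 * t ^ 2 + 2 * H * t - L3 := by
  simp [Pder, iteratedDeriv_one, deriv1]

lemma Pder2 (M33 L3 H D3 A33 t : ℝ) :
    Pder M33 L3 H D3 A33 2 t = 6 * A33 * t ^ 2 - 3 * D3 * t + H := by
  have : iteratedDeriv 2 (Pq M33 L3 H D3 A33) t = 12 * A33 * t ^ 2 - 6 * D3 * t + 2 * H := by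
    rw [show (2:ℕ) = 1 + 1 from rfl, iteratedDeriv_succ, iteratedDeriv_one, deriv1, deriv2]
  simp [Pder, this, Nat.factorial]
  ring
lemma Pder3 (M33 L3 H D3 A33 t : ℝ) :
    Pder M33 L3 H D3 A33 3 t = 4 * A33 * t - D3 := by
  have : iteratedDeriv 3 (Pq M33 L3 H D3 A33) t = 24 * A33 * t - 6 * D3 := by
    rw [show (3:ℕ) = 2 + 1 from rfl, iteratedDeriv_succ,
      show (2:ℕ) = 1 + 1 from rfl, iteratedDeriv_succ, iteratedDeriv_one, deriv1, deriv2, deriv3]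
  simp [Pder, this, Nat.factorial]
  ring
lemma Pder4 (M33 L3 H D3 A33 t : ℝ) :
    Pder M33 L3 H D3 A33 4 t = A33 := by
  have : iteratedDeriv 4 (Pq M33 L3 H D3 A33) t = 24 * A33 := by
    rw [show (4:ℕ) = 3 + 1 from rfl, iteratedDeriv_succ,
      show (3:ℕ) = 2 + 1 from rfl, iteratedDeriv_succ,
      show (2:ℕ) = 1 + 1 from rfl, iteratedDeriv_succ, iteratedDeriv_one,
      deriv1, deriv2, deriv3, deriv4]
  simp [Pder, this, Nat.factorial]

/-- The polynomial `q` is a relative covariant (of weight two, up to the factor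
`a₃`) of the extended group action restricted to the rotation axis:
`(a₀z + 1)⁴ · q̃(((a₂ + a₁a₀)z + a₁)/(a₀z + 1)) = a₃a₂² · q(z)`. -/
theorem q_relative_covariant
    (M33 L3 H D3 A33 a0 a1 a2 a3 : ℝ) (ha2 : a2 ≠ 0) (ha3 : a3 ≠ 0)
    (M33' L3' H' D3' A33' : ℝ)
    (hM : M33' = a3 * Pder M33 L3 H D3 A33 0 a0 / a2 ^ 2)
    (hL : L3' = a3 * (-4 * a1 * Pder M33 L3 H D3 A33 0 a0
      - a2 * Pder M33 L3 H D3 A33 1 a0) / a2 ^ 2)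
    (hH : H' = a3 * (6 * a1 ^ 2 * Pder M33 L3 H D3 A33 0 a0
      + 3 * a1 * a2 * Pder M33 L3 H D3 A33 1 a0
      + a2 ^ 2 * Pder M33 L3 H D3 A33 2 a0) / a2 ^ 2)
    (hD : D3' = a3 * (-4 * a1 ^ 3 * Pder M33 L3 H D3 A33 0 a0
      - 3 * a1 ^ 2 * a2 * Pder M33 L3 H D3 A33 1 a0
      - 2 * a1 * a2 ^ 2 * Pder M33 L3 H D3 A33 2 a0
      - a2 ^ 3 * Pder M33 L3 H D3 A33 3 a0) / a2 ^ 2)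
    (hA : A33' = a3 * (a1 ^ 4 * Pder M33 L3 H D3 A33 0 a0
      + a1 ^ 3 * a2 * Pder M33 L3 H D3 A33 1 a0
      + a1 ^ 2 * a2 ^ 2 * Pder M33 L3 H D3 A33 2 a0
      + a1 * a2 ^ 3 * Pder M33 L3 H D3 A33 3 a0
      + a2 ^ 4 * Pder M33 L3 H D3 A33 4 a0) / a2 ^ 2) :
    ∀ z : ℝ, a0 * z + 1 ≠ 0 →
      (a0 * z + 1) ^ 4 *
        qpoly M33' L3' H' D3' A33' (((a2 + a1 * a0) * z + a1) / (a0 * z + 1)) =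
      a3 * a2 ^ 2 * qpoly M33 L3 H D3 A33 z := by
  intro z hz
  subst hM hL hH hD hA
  simp only [qpoly, Pder0, Pder1, Pder2, Pder3, Pder4]
  field_simp
  ring
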